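/- If A : [a,b] → ℝ^{n×n} is continuous and real analytic on (a,b), then for each fixed τ ∈ [a,b] the state transition matrix t ↦ Φ(t,τ), defined by ∂_t Φ(t,τ) = A(t)Φ(t,τ) with Φ(τ,τ) = I, is real analytic on (a,b). -/

import Mathlib

open Matrix

attribute [local instance] Matrix.normedAddCommGroup Matrix.normedSpace

noncomputable def odeCoeff {n : ℕ} (b : ℕ → Matrix (Fin n) (Fin n) ℝ)
    (x0 : Matrix (Fin n) (Fin n) ℝ) : ℕ → Matrix (Fin n) (Fin n) ℝ
  | 0 => x0
  | (k+1) => ((k : ℝ) + 1)⁻¹ • ∑ j ∈ Finset.range (k+1), b j * odeCoeff b x0 (k - j)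
  decreasing_by omega

lemma matrix_norm_mul_le {n : ℕ} (u v : Matrix (Fin n) (Fin n) ℝ) :
    ‖u * v‖ ≤ n * ‖u‖ * ‖v‖ := by
  rw [Matrix.norm_le_iff (by positivity)]
  intro i j
  calc ‖(u * v) i j‖ = ‖∑ k, u i k * v k j‖ := by rw [Matrix.mul_apply]
    _ ≤ ∑ k : Fin n, ‖u i k * v k j‖ := norm_sum_le _ _
    _ ≤ ∑ k : Fin n, ‖u‖ * ‖v‖ := by
        refine Finset.sum_le_sum fun k _ => ?_
        rw [norm_mul]
        exact mul_le_mul (Matrix.norm_entry_le_entrywise_sup_norm u)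
          (Matrix.norm_entry_le_entrywise_sup_norm v) (norm_nonneg _) (norm_nonneg _)
    _ = n * ‖u‖ * ‖v‖ := by simp [mul_assoc]

lemma odeCoeff_norm_le {n : ℕ} (b : ℕ → Matrix (Fin n) (Fin n) ℝ)
    (x0 : Matrix (Fin n) (Fin n) ℝ) (C ρ : ℝ) (hC : 0 ≤ C) (hρ : 0 ≤ ρ)
    (hb : ∀ j, ‖b j‖ ≤ C * ρ ^ j) :
    ∀ k, ‖odeCoeff b x0 k‖ ≤ (max ‖x0‖ 1) * (max ρ (n * C)) ^ k := by
  set D : ℝ := max ‖x0‖ 1 with hD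
  set σ : ℝ := max ρ (n * C) with hσ
  have hσ0 : 0 ≤ σ := hρ.trans (le_max_left _ _)
  have hρσ : ρ ≤ σ := le_max_left _ _
  have hnCσ : (n : ℝ) * C ≤ σ := le_max_right _ _
  have hD0 : 0 ≤ D := le_trans zero_le_one (le_max_right _ _)
  intro k
  induction k using Nat.strong_induction_on with
  | _ k ih =>
    match k with
    | 0 => simp only [odeCoeff, pow_zero, mul_one]; exact le_max_left _ _
    | (k+1) =>
      rw [odeCoeff]
      have hik : ∀ j ∈ Finset.range (k+1),
          ‖b j * odeCoeff b x0 (k - j)‖ ≤ (n * C * D) * σ ^ k := by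
        intro j hj
        have hj' : j ≤ k := Nat.lt_succ_iff.mp (Finset.mem_range.mp hj)
        calc ‖b j * odeCoeff b x0 (k - j)‖
            ≤ n * ‖b j‖ * ‖odeCoeff b x0 (k - j)‖ := matrix_norm_mul_le _ _
          _ ≤ n * (C * ρ ^ j) * (D * σ ^ (k - j)) := by
              refine mul_le_mul (mul_le_mul_of_nonneg_left (hb j) (by positivity))
                (ih (k - j) (by omega)) (norm_nonneg _) (by positivity)
          _ ≤ n * (C * σ ^ j) * (D * σ ^ (k - j)) := by
              have : ρ ^ j ≤ σ ^ j := pow_le_pow_left₀ hρ hρσ j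
              gcongr
          _ = (n * C * D) * (σ ^ j * σ ^ (k - j)) := by ring
          _ = (n * C * D) * σ ^ k := by rw [← pow_add]; congr 2; omega
      calc ‖((k : ℝ) + 1)⁻¹ • ∑ j ∈ Finset.range (k+1), b j * odeCoeff b x0 (k - j)‖
          = ((k : ℝ) + 1)⁻¹ * ‖∑ j ∈ Finset.range (k+1), b j * odeCoeff b x0 (k - j)‖ := by
            rw [norm_smul, Real.norm_eq_abs, abs_of_pos (by positivity)]
        _ ≤ ((k : ℝ) + 1)⁻¹ * ((k+1) * ((n * C * D) * σ ^ k)) := by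
            refine mul_le_mul_of_nonneg_left ?_ (by positivity)
            refine le_trans (norm_sum_le _ _) ?_
            refine le_trans (Finset.sum_le_sum hik) ?_
            simp [Finset.sum_const]
        _ = (n * C) * (D * σ ^ k) := by
            field_simp
        _ ≤ σ * (D * σ ^ k) := by gcongr
        _ = D * σ ^ (k+1) := by ring

theorem analyticAt_of_hasDerivAt_mul {n : ℕ} {A Φ : ℝ → Matrix (Fin n) (Fin n) ℝ} {t₀ : ℝ}
    (hA : AnalyticAt ℝ A t₀)
    (hΦ : ∀ᶠ t in nhds t₀, HasDerivAt Φ (A t * Φ t) t) :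
    AnalyticAt ℝ Φ t₀ := by
  classical
  obtain ⟨p, hp⟩ := hA
  obtain ⟨r, hr⟩ := hp
  obtain ⟨r', hr'0, hr'r⟩ := ENNReal.lt_iff_exists_nnreal_btwn.1 hr.r_pos
  obtain ⟨C, hC0, hC⟩ := p.norm_mul_pow_le_of_lt_radius (lt_of_lt_of_le hr'r hr.r_le)
  have hr'pos : (0:ℝ) < (r' : ℝ) := by exact_mod_cast hr'0
  set b : ℕ → Matrix (Fin n) (Fin n) ℝ := fun j => p.coeff j with hbdef
  set ρ : ℝ := ((r' : ℝ))⁻¹ with hρdef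
  have hρ0 : 0 < ρ := inv_pos.mpr hr'pos
  have hb : ∀ j, ‖b j‖ ≤ C * ρ ^ j := by
    intro j
    have h1 : ‖b j‖ * (r' : ℝ) ^ j ≤ C := by
      have := hC j
      rwa [FormalMultilinearSeries.norm_apply_eq_norm_coef] at this
    have h2 : ‖b j‖ ≤ C / (r' : ℝ) ^ j := (le_div_iff₀ (pow_pos hr'pos j)).mpr h1
    simpa [hρdef, div_eq_mul_inv, inv_pow] using h2
  set x0 := Φ t₀ with hx0def
  set c : ℕ → Matrix (Fin n) (Fin n) ℝ := odeCoeff b x0 with hcdef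
  set σ : ℝ := max ρ (n * C) with hσdef
  have hσ0 : 0 < σ := lt_of_lt_of_le hρ0 (le_max_left _ _)
  set D : ℝ := max ‖x0‖ 1 with hDdef
  have hD0 : 0 < D := lt_of_lt_of_le one_pos (le_max_right _ _)
  have hc : ∀ k, ‖c k‖ ≤ D * σ ^ k := odeCoeff_norm_le b x0 C ρ hC0.le hρ0.le hb
  obtain ⟨δ, hδ0, hδ⟩ := Metric.eventually_nhds_iff_ball.mp hΦ
  set ε : ℝ := min (min ((2*σ)⁻¹) (r' : ℝ)) δ with hεdef
  have hε0 : 0 < ε := lt_min (lt_min (by positivity) hr'pos) hδ0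
  have hεσ : ε * σ ≤ 1/2 := by
    have h1 : ε ≤ (2*σ)⁻¹ := le_trans (min_le_left _ _) (min_le_left _ _)
    calc ε * σ ≤ (2*σ)⁻¹ * σ := by gcongr
      _ = 1/2 := by field_simp
  have hεr' : ε ≤ (r' : ℝ) := le_trans (min_le_left _ _) (min_le_right _ _)
  have hεδ : ε ≤ δ := min_le_right _ _
  -- the power series of A converges on the ball of radius ε
  have hAsum : ∀ y : ℝ, |y| < ε → HasSum (fun j => y ^ j • b j) (A (t₀ + y)) := by
    intro y hy
    have hy' : y ∈ Metric.eball (0:ℝ) r := by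
      rw [EMetric.mem_ball, edist_zero_right]
      refine lt_of_lt_of_le ?_ hr'r.le
      rw [enorm_eq_nnnorm, ENNReal.coe_lt_coe, ← NNReal.coe_lt_coe, coe_nnnorm, Real.norm_eq_abs]
      exact lt_of_lt_of_le hy hεr'
    have := hr.hasSum hy'
    simp only [FormalMultilinearSeries.apply_eq_pow_smul_coeff] at this
    exact this
  -- summability of the candidate series
  have hq1 : ∀ y : ℝ, |y| < ε → |y| * σ < 1 := by
    intro y hy
    calc |y| * σ < ε * σ := by gcongr
      _ ≤ 1/2 := hεσ
      _ < 1 := by norm_num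
  have hsummΨ : ∀ y : ℝ, |y| < ε → Summable (fun k => y ^ k • c k) := by
    intro y hy
    refine Summable.of_norm_bounded (g := fun k => D * (|y| * σ) ^ k)
      ((summable_geometric_of_lt_one (by positivity) (hq1 y hy)).mul_left D) (fun k => ?_)
    simp only [norm_smul, norm_pow, Real.norm_eq_abs, mul_pow]
    calc |y| ^ k * ‖c k‖ ≤ |y| ^ k * (D * σ ^ k) := by gcongr; exact hc k
      _ = D * (|y| ^ k * σ ^ k) := by ring
  set Ψ : ℝ → Matrix (Fin n) (Fin n) ℝ := fun t => ∑' k, (t - t₀) ^ k • c k with hΨdef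
  have hΨt₀ : Ψ t₀ = x0 := by
    rw [hΨdef]
    simp only [sub_self]
    rw [tsum_eq_single 0 (fun k hk => by simp [zero_pow hk])]
    simp [hcdef, odeCoeff]
  -- term-by-term differentiation
  have hterm : ∀ (k : ℕ) (s : ℝ), HasDerivAt (fun u : ℝ => (u - t₀) ^ k • c k)
      (((k : ℝ) * (s - t₀) ^ (k - 1)) • c k) s := by
    intro k s
    have h1 : HasDerivAt (fun u : ℝ => (u - t₀) ^ k)
        ((k : ℝ) * (s - t₀) ^ (k - 1) * 1) s := ((hasDerivAt_id s).sub_const t₀).pow k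
    simp only [mul_one] at h1
    exact h1.smul_const (c k)
  set u : ℕ → ℝ := fun k => 2 * (D * σ) * ((k : ℝ) * (1/2 : ℝ) ^ k) with hudef
  have husum : Summable u := by
    have h1 : Summable (fun k : ℕ => (k : ℝ) * (1/2 : ℝ) ^ k) := by
      have := summable_pow_mul_geometric_of_norm_lt_one (R := ℝ) 1
        (r := (1/2 : ℝ)) (by norm_num)
      simpa using this
    exact h1.mul_left _
  have hbound : ∀ (k : ℕ) (s : ℝ), s ∈ Metric.ball t₀ ε →
      ‖((k : ℝ) * (s - t₀) ^ (k - 1)) • c k‖ ≤ u k := by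
    intro k s hs
    have hsy : |s - t₀| < ε := by simpa [Real.dist_eq] using hs
    match k with
    | 0 => simp [hudef]
    | (k+1) =>
      have h1 : ‖(((k+1 : ℕ) : ℝ) * (s - t₀) ^ k) • c (k+1)‖
          = ((k : ℝ) + 1) * |s - t₀| ^ k * ‖c (k+1)‖ := by
        rw [norm_smul, Real.norm_eq_abs, abs_mul, abs_pow]
        push_cast
        rw [abs_of_nonneg (by positivity)]
      calc ‖(((k+1 : ℕ) : ℝ) * (s - t₀) ^ ((k+1) - 1)) • c (k+1)‖
          = ((k : ℝ) + 1) * |s - t₀| ^ k * ‖c (k+1)‖ := h1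
        _ ≤ ((k : ℝ) + 1) * ε ^ k * (D * σ ^ (k+1)) := by
            refine mul_le_mul (mul_le_mul_of_nonneg_left
              (pow_le_pow_left₀ (abs_nonneg _) hsy.le k) (by positivity)) (hc (k+1))
              (norm_nonneg _) (by positivity)
        _ = (D * σ) * (((k : ℝ) + 1) * (ε * σ) ^ k) := by rw [mul_pow]; ring
        _ ≤ (D * σ) * (((k : ℝ) + 1) * (1/2 : ℝ) ^ k) := by
            have h2 : (ε * σ) ^ k ≤ (1/2 : ℝ) ^ k := pow_le_pow_left₀ (by positivity) hεσ k
            have h3 : (0:ℝ) ≤ D * σ := by positivity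
            have h4 : (0:ℝ) ≤ (k : ℝ) + 1 := by positivity
            exact mul_le_mul_of_nonneg_left (mul_le_mul_of_nonneg_left h2 h4) h3
        _ = u (k+1) := by
            rw [hudef]
            push_cast
            rw [pow_succ]
            ring
  have hg0 : Summable (fun k : ℕ => (t₀ - t₀ - t₀ + t₀) ^ k • c k) := by
    have := hsummΨ 0 (by simpa using hε0)
    simpa using this
  have hΨderiv : ∀ t ∈ Metric.ball t₀ ε, HasDerivAt Ψ (A t * Ψ t) t := by
    intro t ht
    have hty : |t - t₀| < ε := by simpa [Real.dist_eq] using ht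
    have hder : HasDerivAt (fun s : ℝ => ∑' k, (s - t₀) ^ k • c k)
        (∑' k : ℕ, ((k : ℝ) * (t - t₀) ^ (k - 1)) • c k) t := by
      refine hasDerivAt_tsum_of_isPreconnected husum Metric.isOpen_ball
        ((convex_ball t₀ ε).isPreconnected) (fun k s hs => hterm k s) hbound
        (Metric.mem_ball_self hε0) ?_ ht
      have := hsummΨ 0 (by simpa using hε0)
      simp at this ⊢
      exact this
    have key : (∑' k : ℕ, ((k : ℝ) * (t - t₀) ^ (k - 1)) • c k) = A t * Ψ t := by
      set y : ℝ := t - t₀ with hy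
      have hAt : HasSum (fun j => y ^ j • b j) (A t) := by
        have := hAsum y hty
        rwa [show t₀ + y = t by rw [hy]; ring] at this
      have hΨt : HasSum (fun k => y ^ k • c k) (Ψ t) := (hsummΨ y hty).hasSum
      have hgeo := summable_geometric_of_lt_one
        (show (0:ℝ) ≤ |y| * σ by positivity) (hq1 y hty)
      have hprod : Summable (fun x : ℕ × ℕ => (y ^ x.1 • b x.1) * (y ^ x.2 • c x.2)) := by
        refine Summable.of_norm_bounded
          (g := fun x : ℕ × ℕ => ((n : ℝ) * C * D) * ((|y| * σ) ^ x.1 * (|y| * σ) ^ x.2))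
          (Summable.mul_left _ (hgeo.mul_of_nonneg hgeo
            (fun _ => by positivity) (fun _ => by positivity))) ?_
        rintro ⟨j, k⟩
        have hρσ : ρ ≤ σ := le_max_left _ _
        calc ‖(y ^ j • b j) * (y ^ k • c k)‖
            ≤ n * ‖y ^ j • b j‖ * ‖y ^ k • c k‖ := matrix_norm_mul_le _ _
          _ = n * (|y| ^ j * ‖b j‖) * (|y| ^ k * ‖c k‖) := by
              rw [norm_smul, norm_smul, norm_pow, norm_pow, Real.norm_eq_abs]
          _ ≤ n * (|y| ^ j * (C * σ ^ j)) * (|y| ^ k * (D * σ ^ k)) := by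
              have hbj : ‖b j‖ ≤ C * σ ^ j := (hb j).trans
                (mul_le_mul_of_nonneg_left (pow_le_pow_left₀ hρ0.le hρσ j) hC0.le)
              exact mul_le_mul
                (mul_le_mul_of_nonneg_left (mul_le_mul_of_nonneg_left hbj (by positivity))
                  (by positivity))
                (mul_le_mul_of_nonneg_left (hc k) (by positivity))
                (by positivity) (by positivity)
          _ = ((n : ℝ) * C * D) * ((|y| * σ) ^ j * (|y| * σ) ^ k) := by
              rw [mul_pow, mul_pow]; ring
      have hcauchy := Summable.tsum_mul_tsum_eq_tsum_sum_antidiagonal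
        hAt.summable hΨt.summable hprod
      rw [hAt.tsum_eq, hΨt.tsum_eq] at hcauchy
      have hanti : ∀ m : ℕ, (∑ kl ∈ Finset.HasAntidiagonal.antidiagonal m,
          (y ^ kl.1 • b kl.1) * (y ^ kl.2 • c kl.2))
          = y ^ m • (((m : ℝ) + 1) • c (m + 1)) := by
        intro m
        rw [Finset.Nat.sum_antidiagonal_eq_sum_range_succ_mk]
        have hterms : ∀ j ∈ Finset.range (m+1),
            (y ^ j • b j) * (y ^ (m - j) • c (m - j)) = y ^ m • (b j * c (m - j)) := by
          intro j hj
          rw [smul_mul_smul_comm, ← pow_add]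
          congr 2
          have : j ≤ m := Nat.lt_succ_iff.mp (Finset.mem_range.mp hj)
          omega
        rw [Finset.sum_congr rfl hterms, ← Finset.smul_sum]
        congr 1
        have hrec : c (m+1) = ((m : ℝ) + 1)⁻¹ • ∑ j ∈ Finset.range (m+1), b j * c (m - j) := by
          rw [hcdef]; rw [odeCoeff]
        rw [hrec, smul_smul, mul_inv_cancel₀ (by positivity), one_smul]
      have hLsum : Summable (fun k : ℕ => ((k : ℝ) * y ^ (k - 1)) • c k) :=
        Summable.of_norm_bounded (g := u) husum (fun k => hbound k t ht)
      calc (∑' k : ℕ, ((k : ℝ) * y ^ (k - 1)) • c k)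
          = (((0:ℕ) : ℝ) * y ^ (0 - 1)) • c 0
            + ∑' k : ℕ, (((k+1 : ℕ) : ℝ) * y ^ ((k+1) - 1)) • c (k+1) := by
            rw [← Summable.tsum_eq_zero_add hLsum]
        _ = ∑' k : ℕ, y ^ k • (((k : ℝ) + 1) • c (k+1)) := by
            rw [Nat.cast_zero, zero_mul, zero_smul, zero_add]
            congr 1
            funext k
            rw [Nat.add_sub_cancel, Nat.cast_add, Nat.cast_one, mul_comm, mul_smul]
        _ = ∑' m : ℕ, ∑ kl ∈ Finset.HasAntidiagonal.antidiagonal m,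
              (y ^ kl.1 • b kl.1) * (y ^ kl.2 • c kl.2) := by
            congr 1; funext m; rw [hanti m]
        _ = A t * Ψ t := hcauchy.symm
    rw [key] at hder
    exact hder
  -- analyticity of Ψ at t₀
  have hΨaa : AnalyticAt ℝ Ψ t₀ := by
    set q : FormalMultilinearSeries ℝ ℝ (Matrix (Fin n) (Fin n) ℝ) :=
      fun k => ContinuousMultilinearMap.mkPiRing ℝ (Fin k) (c k) with hqdef
    refine ⟨q, hasFPowerSeriesAt_iff.2 ?_⟩
    filter_upwards [Metric.ball_mem_nhds (0:ℝ) hε0] with y hy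
    have hy' : |y| < ε := by simpa [Real.dist_eq] using hy
    have hcoeff : ∀ k : ℕ, q.coeff k = c k := by
      intro k
      simp [hqdef, FormalMultilinearSeries.coeff]
      show (∏ i : Fin k, (1 : Fin k → ℝ) i) • c k = c k
      simp
    have hΨval : Ψ (t₀ + y) = ∑' k : ℕ, y ^ k • c k := by
      rw [hΨdef]; simp
    rw [hΨval]
    simp only [hcoeff]
    exact (hsummΨ y hy').hasSum
  -- uniqueness of solutions: Φ agrees with Ψ near t₀
  set η : ℝ := ε / 2 with hηdef
  have hη0 : 0 < η := by positivity
  have hball : Set.Icc (t₀ - η) (t₀ + η) ⊆ Metric.eball t₀ r := by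
    intro s hs
    rw [EMetric.mem_ball, edist_dist, Real.dist_eq]
    have h1 : |s - t₀| ≤ η := abs_sub_le_iff.mpr ⟨by linarith [hs.2], by linarith [hs.1]⟩
    have h2 : |s - t₀| < (r' : ℝ) := lt_of_le_of_lt h1 (lt_of_lt_of_le (by linarith) hεr')
    refine lt_of_le_of_lt ?_ hr'r
    rw [← ENNReal.ofReal_coe_nnreal]
    exact ENNReal.ofReal_le_ofReal h2.le
  have hAcont : ContinuousOn A (Set.Icc (t₀ - η) (t₀ + η)) := hr.continuousOn.mono hball
  obtain ⟨M, hM⟩ := (isCompact_Icc).exists_bound_of_continuousOn hAcont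
  set M' : ℝ := max M 0 with hM'def
  have hM'0 : 0 ≤ M' := le_max_right _ _
  have hM' : ∀ s ∈ Set.Icc (t₀ - η) (t₀ + η), ‖A s‖ ≤ M' :=
    fun s hs => (hM s hs).trans (le_max_left _ _)
  set clamp : ℝ → ℝ := fun s => max (t₀ - η) (min s (t₀ + η)) with hclampdef
  have hclampmem : ∀ s, clamp s ∈ Set.Icc (t₀ - η) (t₀ + η) := by
    intro s
    exact ⟨le_max_left _ _, max_le (by linarith) (min_le_right _ _)⟩
  have hclampeq : ∀ s, |s - t₀| < η → clamp s = s := by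
    intro s hs
    rw [abs_sub_lt_iff] at hs
    rw [hclampdef]
    simp only
    rw [min_eq_left (by linarith), max_eq_right (by linarith)]
  set K : NNReal := Real.toNNReal ((n : ℝ) * M') with hKdef
  set v : ℝ → Matrix (Fin n) (Fin n) ℝ → Matrix (Fin n) (Fin n) ℝ :=
    fun s x => A (clamp s) * x with hvdef
  have hv : ∀ s, LipschitzOnWith K (v s) Set.univ := by
    intro s
    refine LipschitzWith.lipschitzOnWith (LipschitzWith.of_dist_le_mul fun x z => ?_)
    rw [dist_eq_norm, dist_eq_norm]
    have heq2 : v s x - v s z = A (clamp s) * (x - z) := by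
      rw [hvdef]; simp [mul_sub]
    rw [heq2]
    calc ‖A (clamp s) * (x - z)‖ ≤ n * ‖A (clamp s)‖ * ‖x - z‖ := matrix_norm_mul_le _ _
      _ ≤ n * M' * ‖x - z‖ := by
          refine mul_le_mul_of_nonneg_right ?_ (norm_nonneg _)
          exact mul_le_mul_of_nonneg_left (hM' _ (hclampmem s)) (by positivity)
      _ = (K : ℝ) * ‖x - z‖ := by
          rw [hKdef, Real.coe_toNNReal _ (by positivity)]
  have heven : Φ =ᶠ[nhds t₀] Ψ := by
    refine ODE_solution_unique_of_eventually (s := fun _ => Set.univ) (Filter.Eventually.of_forall hv) ?_ ?_ hΨt₀.symm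
    · filter_upwards [Metric.ball_mem_nhds t₀ hη0] with s hs
      have hsη : |s - t₀| < η := by simpa [Real.dist_eq] using hs
      have hsδ : s ∈ Metric.ball t₀ δ := by
        rw [Metric.mem_ball, Real.dist_eq]
        exact lt_of_lt_of_le hsη (by linarith [hεδ])
      refine ⟨?_, Set.mem_univ _⟩
      have := hδ s hsδ
      rw [hvdef]
      simp only [hclampeq s hsη]
      exact this
    · filter_upwards [Metric.ball_mem_nhds t₀ hη0] with s hs
      have hsη : |s - t₀| < η := by simpa [Real.dist_eq] using hs
      have hsε : s ∈ Metric.ball t₀ ε := by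
        rw [Metric.mem_ball, Real.dist_eq]
        exact lt_of_lt_of_le hsη (by linarith)
      refine ⟨?_, Set.mem_univ _⟩
      have := hΨderiv s hsε
      rw [hvdef]
      simp only [hclampeq s hsη]
      exact this
  exact hΨaa.congr heven.symm

/-- If `A : [a,b] → ℝ^{n×n}` is continuous and real analytic on `(a,b)`, then for each fixed
`τ ∈ [a,b]` the state transition matrix `t ↦ Φ(t,τ)`, defined by `∂ₜΦ(t,τ) = A(t)Φ(t,τ)` with
`Φ(τ,τ) = I`, is real analytic on `(a,b)`. -/
theorem transition_matrix_analytic (n : ℕ) (a b : ℝ)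
    (A : ℝ → Matrix (Fin n) (Fin n) ℝ)
    (hAc : ContinuousOn A (Set.Icc a b))
    (hAan : AnalyticOnNhd ℝ A (Set.Ioo a b))
    (τ : ℝ) (hτ : τ ∈ Set.Icc a b)
    (Φ : ℝ → Matrix (Fin n) (Fin n) ℝ)
    (hΦ : ∀ t ∈ Set.Icc a b, HasDerivWithinAt Φ (A t * Φ t) (Set.Icc a b) t)
    (hinit : Φ τ = 1) :
    AnalyticOnNhd ℝ Φ (Set.Ioo a b) := by
  intro t₀ ht₀
  refine analyticAt_of_hasDerivAt_mul (hAan t₀ ht₀) ?_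
  filter_upwards [isOpen_Ioo.mem_nhds ht₀] with t ht
  exact (hΦ t (Set.Ioo_subset_Icc_self ht)).hasDerivAt
    (Icc_mem_nhds ht.1 ht.2)
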